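/- There is a universal constant c > 0 such that for every dimension d ≥ 2, every horizon K with K ≥ 1.5·d² and dK ≥ 3, every variance level σ ∈ (0,1], and every deterministic algorithm π for the K-round hypercube instance, with the weight vector μ drawn uniformly from {−Δ,Δ}^d (Δ = 1/√(96K)), the probability (over μ and the rewards) that Regret(K) ≥ d·√(K·σ²)/(16·√6) is at least c/log(dK). -/

import Mathlib

set_option maxHeartbeats 1000000


open Finset

namespace HypercubeBandit2

/-- An element of the hypercube `{−1,1}^d`, encoded by its sign pattern. -/
abbrev Act (d : ℕ) := Fin d → Bool

/-- The real vector in `{−1,1}^d ⊆ ℝ^d` encoded by a sign pattern. -/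
noncomputable def embed {d : ℕ} (a : Act d) : Fin d → ℝ := fun i => if a i then 1 else -1

/-- The weight vector in `{−Δ,Δ}^d ⊆ ℝ^d` encoded by a sign pattern. -/
noncomputable def wvec {d : ℕ} (Δ : ℝ) (μ : Act d) : Fin d → ℝ := fun i => if μ i then Δ else -Δ

/-- The standard inner product on `ℝ^d`. -/
noncomputable def ip {d : ℕ} (v w : Fin d → ℝ) : ℝ := ∑ i, v i * w i

/-- A deterministic algorithm: a map choosing, from the history of past
(action, reward) pairs, the next action of the hypercube (the round index is
encoded by the length of the history). -/
def Alg (d : ℕ) := List ((Fin d → ℝ) × ℝ) → Act d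

/-- The history of (action, reward) pairs after `k` rounds, given the Bernoulli
outcomes `ω`: in round `k` the reward is `σ · B` with `B = ω k ∈ {0,1}`. -/
noncomputable def hist {d : ℕ} (π : Alg d) (σ : ℝ) (ω : ℕ → Bool) :
    ℕ → List ((Fin d → ℝ) × ℝ)
  | 0 => []
  | k + 1 =>
      hist π σ ω k ++ [(embed (π (hist π σ ω k)), σ * (if ω k then 1 else 0))]

/-- The action selected by the algorithm in round `k`. -/
noncomputable def act {d : ℕ} (π : Alg d) (σ : ℝ) (ω : ℕ → Bool) (k : ℕ) : Act d :=
  π (hist π σ ω k)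

/-- The Bernoulli success probability of action `a`: `1/3 + ⟨μ, a⟩`. -/
noncomputable def bp {d : ℕ} (Δ : ℝ) (μ a : Act d) : ℝ :=
  1 / 3 + ip (wvec Δ μ) (embed a)

/-- Extension of a finite outcome sequence to `ℕ`. -/
def ext {K : ℕ} (ω : Fin K → Bool) : ℕ → Bool :=
  fun j => if h : j < K then ω ⟨j, h⟩ else false

/-- The probability of the trajectory determined by the Bernoulli outcomes `ω`
(rewards are drawn independently across rounds given the chosen actions). -/
noncomputable def trajP (d K : ℕ) (Δ σ : ℝ) (π : Alg d) (μ : Act d)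
    (ω : Fin K → Bool) : ℝ :=
  ∏ k : Fin K,
    (if ω k then bp Δ μ (act π σ (ext ω) k)
     else 1 - bp Δ μ (act π σ (ext ω) k))

/-- The maximal mean `max_{a ∈ {−1,1}^d} ⟨μ, a⟩`. -/
noncomputable def maxRew (d : ℕ) (Δ : ℝ) (μ : Act d) : ℝ :=
  Finset.univ.sup' Finset.univ_nonempty (fun a : Act d => ip (wvec Δ μ) (embed a))

/-- The pseudo-regret `∑_{k=1}^K σ·(max_{a∈𝒜} ⟨μ,a⟩ − ⟨μ, a_k⟩)`. -/
noncomputable def regret (d K : ℕ) (Δ σ : ℝ) (π : Alg d) (μ : Act d)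
    (ω : Fin K → Bool) : ℝ :=
  ∑ k : Fin K, σ * (maxRew d Δ μ - ip (wvec Δ μ) (embed (act π σ (ext ω) k)))

/-- The Bayes expected pseudo-regret: `μ` is uniform on `{−Δ,Δ}^d` with
`Δ = 1/√(96K)`, and the rewards follow scaled Bernoulli distributions
`σ·B(1/3 + ⟨μ,a⟩)`. -/
noncomputable def bayesRegret (d K : ℕ) (σ : ℝ) (π : Alg d) : ℝ :=
  (1 / 2 ^ d) * ∑ μ : Act d, ∑ ω : Fin K → Bool,
    trajP d K (1 / Real.sqrt (96 * K)) σ π μ ω *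
      regret d K (1 / Real.sqrt (96 * K)) σ π μ ω


/-- The probability (over the uniform draw of `μ ∈ {−Δ,Δ}^d` and the rewards)
that the pseudo-regret over `K` rounds is at least `t`. -/
noncomputable def probRegretGe (d K : ℕ) (σ t : ℝ) (π : Alg d) : ℝ :=
  (1 / 2 ^ d) * ∑ μ : Act d, ∑ ω : Fin K → Bool,
    (if t ≤ regret d K (1 / Real.sqrt (96 * K)) σ π μ ω
     then trajP d K (1 / Real.sqrt (96 * K)) σ π μ ω else 0)

-- ===== Auxiliary lemmas =====

lemma ext_snoc {K : ℕ} (ω : Fin K → Bool) (b : Bool) :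
    ext (Fin.snoc ω b : Fin (K+1) → Bool) = Function.update (ext ω) K b := by
  funext j
  rcases lt_trichotomy j K with hj | hj | hj
  · have h1 : j < K + 1 := by omega
    rw [Function.update_of_ne (by omega : j ≠ K)]
    simp only [ext, dif_pos h1, dif_pos hj]
    have h2 : (⟨j, h1⟩ : Fin (K+1)) = Fin.castSucc ⟨j, hj⟩ := rfl
    rw [h2, Fin.snoc_castSucc]
  · subst hj
    have h1 : j < j + 1 := by omega
    have h2 : (⟨j, h1⟩ : Fin (j+1)) = Fin.last j := rfl
    rw [show (Function.update (ext ω) j b) j = b from Function.update_self _ _ _]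
    simp only [ext, dif_pos h1, h2, Fin.snoc_last]
  · have h1 : ¬ j < K + 1 := by omega
    rw [Function.update_of_ne (by omega : j ≠ K)]
    simp only [ext, dif_neg h1, dif_neg (by omega : ¬ j < K)]

def snocEquiv (K : ℕ) : ((Fin K → Bool) × Bool) ≃ (Fin (K+1) → Bool) where
  toFun p := Fin.snoc p.1 p.2
  invFun ω := (Fin.init ω, ω (Fin.last K))
  left_inv p := by simp [Fin.init_snoc, Fin.snoc_last]
  right_inv ω := by simp [Fin.snoc_init_self]

lemma sum_prod_ge (c : ℝ) (hc : 0 ≤ c) (f : ℕ → (ℕ → Bool) → ℝ)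
    (hnn : ∀ k ω, 0 ≤ f k ω)
    (hdep : ∀ k (ω ω' : ℕ → Bool), (∀ j, j ≤ k → ω j = ω' j) → f k ω = f k ω')
    (hstep : ∀ k (ω : ℕ → Bool),
      c ≤ f k (Function.update ω k true) + f k (Function.update ω k false)) :
    ∀ K : ℕ, c ^ K ≤ ∑ ω : Fin K → Bool, ∏ k : Fin K, f k (ext ω) := by
  intro K
  induction K with
  | zero => simp
  | succ K ih =>
    rw [← Equiv.sum_comp (snocEquiv K) (fun ω => ∏ k : Fin (K+1), f k (ext ω)),
      Fintype.sum_prod_type]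
    have hrw : ∀ (ω : Fin K → Bool) (b : Bool),
        (∏ k : Fin (K+1), f k (ext (snocEquiv K (ω, b)))) =
          (∏ k : Fin K, f k (ext ω)) * f K (Function.update (ext ω) K b) := by
      intro ω b
      show (∏ k : Fin (K+1), f k (ext (Fin.snoc ω b : Fin (K+1) → Bool))) = _
      rw [ext_snoc, Fin.prod_univ_castSucc]
      congr 1
      apply Finset.prod_congr rfl
      intro k _
      apply hdep
      intro j hj
      have hk := k.isLt
      have hj' : j ≤ (k : ℕ) := by simpa using hj
      exact Function.update_of_ne (by omega : j ≠ K) _ _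
    calc c ^ (K+1) = c ^ K * c := by ring
    _ ≤ (∑ ω : Fin K → Bool, ∏ k : Fin K, f k (ext ω)) * c := by
        exact mul_le_mul_of_nonneg_right ih hc
    _ = ∑ ω : Fin K → Bool, (∏ k : Fin K, f k (ext ω)) * c := by rw [Finset.sum_mul]
    _ ≤ _ := by
        apply Finset.sum_le_sum
        intro ω _
        rw [Fintype.sum_bool, hrw ω true, hrw ω false, ← mul_add]
        exact mul_le_mul_of_nonneg_left (hstep K (ext ω))
          (Finset.prod_nonneg fun k _ => hnn _ _)

lemma sum_prod_eq (f : ℕ → (ℕ → Bool) → ℝ)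
    (hdep : ∀ k (ω ω' : ℕ → Bool), (∀ j, j ≤ k → ω j = ω' j) → f k ω = f k ω')
    (hstep : ∀ k (ω : ℕ → Bool),
      f k (Function.update ω k true) + f k (Function.update ω k false) = 1) :
    ∀ K : ℕ, ∑ ω : Fin K → Bool, ∏ k : Fin K, f k (ext ω) = 1 := by
  intro K
  induction K with
  | zero => simp
  | succ K ih =>
    rw [← Equiv.sum_comp (snocEquiv K) (fun ω => ∏ k : Fin (K+1), f k (ext ω)),
      Fintype.sum_prod_type]
    have hrw : ∀ (ω : Fin K → Bool) (b : Bool),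
        (∏ k : Fin (K+1), f k (ext (snocEquiv K (ω, b)))) =
          (∏ k : Fin K, f k (ext ω)) * f K (Function.update (ext ω) K b) := by
      intro ω b
      show (∏ k : Fin (K+1), f k (ext (Fin.snoc ω b : Fin (K+1) → Bool))) = _
      rw [ext_snoc, Fin.prod_univ_castSucc]
      congr 1
      apply Finset.prod_congr rfl
      intro k _
      apply hdep
      intro j hj
      have hk := k.isLt
      have hj' : j ≤ (k : ℕ) := by simpa using hj
      exact Function.update_of_ne (by omega : j ≠ K) _ _
    calc (∑ ω : Fin K → Bool, ∑ b : Bool, ∏ k : Fin (K+1), f k (ext (snocEquiv K (ω, b))))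
        = ∑ ω : Fin K → Bool, (∏ k : Fin K, f k (ext ω)) * 1 := by
          apply Finset.sum_congr rfl
          intro ω _
          rw [Fintype.sum_bool, hrw ω true, hrw ω false, ← mul_add, hstep K (ext ω)]
    _ = 1 := by simpa using ih

lemma sqrt_prod' {ι : Type*} (s : Finset ι) (f : ι → ℝ) (h : ∀ i ∈ s, 0 ≤ f i) :
    Real.sqrt (∏ i ∈ s, f i) = ∏ i ∈ s, Real.sqrt (f i) := by
  induction s using Finset.cons_induction with
  | empty => simp
  | cons a s ha ih =>
    rw [Finset.prod_cons, Finset.prod_cons, Real.sqrt_mul (h a (Finset.mem_cons_self a s)),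
      ih (fun i hi => h i (Finset.mem_cons.2 (Or.inr hi)))]

lemma bc_step (Δ p q : ℝ) (hΔ : 0 ≤ Δ) (hp1 : 1/4 ≤ p) (hp2 : p ≤ 5/12)
    (hq1 : 1/4 ≤ q) (hq2 : q ≤ 5/12) (hpq : |p - q| ≤ 2*Δ) :
    1 - 3*Δ^2 ≤ Real.sqrt (p*q) + Real.sqrt ((1-p)*(1-q)) := by
  have hp0 : (0:ℝ) ≤ p := by linarith
  have hq0 : (0:ℝ) ≤ q := by linarith
  have hp1' : (0:ℝ) ≤ 1 - p := by linarith
  have hq1' : (0:ℝ) ≤ 1 - q := by linarith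
  set x := Real.sqrt p with hx
  set y := Real.sqrt q with hy
  set u := Real.sqrt (1-p) with hu
  set v := Real.sqrt (1-q) with hv
  have hx2 : x^2 = p := Real.sq_sqrt hp0
  have hy2 : y^2 = q := Real.sq_sqrt hq0
  have hu2 : u^2 = 1-p := Real.sq_sqrt hp1'
  have hv2 : v^2 = 1-q := Real.sq_sqrt hq1'
  have hx0 : 0 ≤ x := Real.sqrt_nonneg _
  have hy0 : 0 ≤ y := Real.sqrt_nonneg _
  have hu0 : 0 ≤ u := Real.sqrt_nonneg _
  have hv0 : 0 ≤ v := Real.sqrt_nonneg _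
  have hxh : (1:ℝ)/2 ≤ x := by
    rw [hx, show (1:ℝ)/2 = Real.sqrt (1/4) by
      rw [show (1:ℝ)/4 = (1/2)^2 by norm_num, Real.sqrt_sq (by norm_num)]]
    exact Real.sqrt_le_sqrt hp1
  have hyh : (1:ℝ)/2 ≤ y := by
    rw [hy, show (1:ℝ)/2 = Real.sqrt (1/4) by
      rw [show (1:ℝ)/4 = (1/2)^2 by norm_num, Real.sqrt_sq (by norm_num)]]
    exact Real.sqrt_le_sqrt hq1
  have huv : (7:ℝ)/12 ≤ u * v := by
    rw [hu, hv, ← Real.sqrt_mul hp1']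
    rw [show (7:ℝ)/12 = Real.sqrt ((7/12)^2) by rw [Real.sqrt_sq (by norm_num)]]
    apply Real.sqrt_le_sqrt
    nlinarith
  have hpq2 : (p - q)^2 ≤ 4*Δ^2 := by
    have := abs_nonneg (p - q)
    nlinarith [sq_abs (p - q)]
  have hxy : (x - y)^2 ≤ 4*Δ^2 := by
    have h1 : (x - y) * (x + y) = p - q := by linear_combination hx2 - hy2
    have h2 : (1:ℝ) ≤ (x + y)^2 := by nlinarith
    have h3 : (x - y)^2 * (x + y)^2 = (p - q)^2 := by rw [← mul_pow, h1]
    calc (x - y)^2 = (x - y)^2 * 1 := by ring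
    _ ≤ (x - y)^2 * (x + y)^2 := mul_le_mul_of_nonneg_left h2 (sq_nonneg _)
    _ = (p - q)^2 := h3
    _ ≤ 4*Δ^2 := hpq2
  have huv2 : (u - v)^2 ≤ 12/7*Δ^2 := by
    have h1 : (u - v) * (u + v) = q - p := by linear_combination hu2 - hv2
    have h2 : (7:ℝ)/3 ≤ (u + v)^2 := by nlinarith
    have h3 : (u - v)^2 * (u + v)^2 = (q - p)^2 := by rw [← mul_pow, h1]
    have h4 : (u - v)^2 * (7/3) ≤ 4*Δ^2 := by
      calc (u - v)^2 * (7/3) ≤ (u - v)^2 * (u + v)^2 :=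
            mul_le_mul_of_nonneg_left h2 (sq_nonneg _)
      _ = (q - p)^2 := h3
      _ ≤ 4*Δ^2 := by nlinarith [hpq2]
    linarith
  have hid : 2*(x*y + u*v) = 2 - (x - y)^2 - (u - v)^2 := by
    linear_combination hx2 + hy2 + hu2 + hv2
  have hsq : Real.sqrt (p*q) = x * y := Real.sqrt_mul hp0 q
  have hsq2 : Real.sqrt ((1-p)*(1-q)) = u * v := Real.sqrt_mul hp1' _
  rw [hsq, hsq2]
  linarith [hxy, huv2, hid, sq_nonneg Δ]

lemma min_sum_ge {ι : Type*} [Fintype ι] (P Q : ι → ℝ) (hP : ∀ x, 0 ≤ P x)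
    (hQ : ∀ x, 0 ≤ Q x) (hP1 : ∑ x, P x = 1) (hQ1 : ∑ x, Q x = 1) :
    (∑ x, Real.sqrt (P x * Q x))^2 ≤ 2 * ∑ x, min (P x) (Q x) := by
  have h1 : ∀ x, Real.sqrt (P x * Q x)
      = Real.sqrt (min (P x) (Q x)) * Real.sqrt (max (P x) (Q x)) := by
    intro x
    rw [← Real.sqrt_mul (le_min (hP x) (hQ x)), min_mul_max]
  have hmin0 : ∀ x, 0 ≤ min (P x) (Q x) := fun x => le_min (hP x) (hQ x)
  have hmax0 : ∀ x, 0 ≤ max (P x) (Q x) := fun x => le_trans (hP x) (le_max_left _ _)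
  have hmaxle : ∑ x, max (P x) (Q x) ≤ 2 := by
    calc ∑ x, max (P x) (Q x) ≤ ∑ x, (P x + Q x) :=
          Finset.sum_le_sum fun x _ => max_le (by linarith [hQ x]) (by linarith [hP x])
    _ = 2 := by rw [Finset.sum_add_distrib, hP1, hQ1]; norm_num
  have hminnn : 0 ≤ ∑ x, min (P x) (Q x) := Finset.sum_nonneg fun x _ => hmin0 x
  calc (∑ x, Real.sqrt (P x * Q x))^2
      = (∑ x, Real.sqrt (min (P x) (Q x)) * Real.sqrt (max (P x) (Q x)))^2 := by
        rw [Finset.sum_congr rfl (fun x _ => h1 x)]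
    _ ≤ (∑ x, Real.sqrt (min (P x) (Q x))^2) * (∑ x, Real.sqrt (max (P x) (Q x))^2) :=
        Finset.sum_mul_sq_le_sq_mul_sq _ _ _
    _ = (∑ x, min (P x) (Q x)) * (∑ x, max (P x) (Q x)) := by
        rw [Finset.sum_congr rfl (fun x _ => Real.sq_sqrt (hmin0 x)),
          Finset.sum_congr rfl (fun x _ => Real.sq_sqrt (hmax0 x))]
    _ ≤ (∑ x, min (P x) (Q x)) * 2 := mul_le_mul_of_nonneg_left hmaxle hminnn
    _ = 2 * ∑ x, min (P x) (Q x) := by ring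

lemma hist_congr {d} (π : Alg d) (σ : ℝ) (k : ℕ) (ω ω' : ℕ → Bool)
    (h : ∀ j, j < k → ω j = ω' j) : hist π σ ω k = hist π σ ω' k := by
  induction k with
  | zero => rfl
  | succ k ih =>
    have h1 : hist π σ ω k = hist π σ ω' k := ih (fun j hj => h j (by omega))
    show hist π σ ω k ++ _ = hist π σ ω' k ++ _
    rw [h1, h k (by omega)]

lemma act_congr {d} (π : Alg d) (σ : ℝ) (k : ℕ) (ω ω' : ℕ → Bool)
    (h : ∀ j, j < k → ω j = ω' j) : act π σ ω k = act π σ ω' k := by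
  unfold act; rw [hist_congr π σ k ω ω' h]

def flip {d : ℕ} (i : Fin d) (μ : Act d) : Act d := Function.update μ i (!μ i)

lemma flip_flip {d : ℕ} (i : Fin d) (μ : Act d) : flip i (flip i μ) = μ := by
  funext j
  by_cases h : j = i
  · subst h; simp [flip]
  · simp [flip, Function.update_of_ne h]

def flipEquiv {d : ℕ} (i : Fin d) : Act d ≃ Act d where
  toFun := flip i
  invFun := flip i
  left_inv := flip_flip i
  right_inv := flip_flip i

lemma ip_eq {d : ℕ} (Δ : ℝ) (μ a : Act d) :
    ip (wvec Δ μ) (embed a) =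
      (d : ℝ) * Δ - 2 * Δ * ∑ i, (if a i = μ i then (0:ℝ) else 1) := by
  unfold ip
  have : ∀ i : Fin d, wvec Δ μ i * embed a i
      = Δ - 2 * Δ * (if a i = μ i then (0:ℝ) else 1) := by
    intro i
    cases hμ : μ i <;> cases ha : a i <;> simp [wvec, embed, hμ, ha] <;> ring
  rw [Finset.sum_congr rfl (fun i _ => this i), Finset.sum_sub_distrib, Finset.sum_const,
    Finset.card_univ, Fintype.card_fin, ← Finset.mul_sum]
  ring

lemma maxRew_eq {d : ℕ} (Δ : ℝ) (hΔ : 0 ≤ Δ) (μ : Act d) :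
    maxRew d Δ μ = (d : ℝ) * Δ := by
  apply le_antisymm
  · apply Finset.sup'_le
    intro a _
    rw [ip_eq]
    have h1 : (0:ℝ) ≤ ∑ i, (if a i = μ i then (0:ℝ) else 1) :=
      Finset.sum_nonneg fun i _ => by positivity
    nlinarith
  · have h0 : ip (wvec Δ μ) (embed μ) = (d:ℝ)*Δ := by
      rw [ip_eq]; simp
    calc (d:ℝ)*Δ = ip (wvec Δ μ) (embed μ) := h0.symm
    _ ≤ maxRew d Δ μ :=
        Finset.le_sup' (fun a : Act d => ip (wvec Δ μ) (embed a)) (Finset.mem_univ μ)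

lemma bp_bounds {d : ℕ} (Δ : ℝ) (hΔ : 0 ≤ Δ) (hΔd : (d : ℝ) * Δ ≤ 1/12) (μ a : Act d) :
    1/4 ≤ bp Δ μ a ∧ bp Δ μ a ≤ 5/12 := by
  have h1 : (0:ℝ) ≤ ∑ i, (if a i = μ i then (0:ℝ) else 1) :=
    Finset.sum_nonneg fun i _ => by positivity
  have h2 : (∑ i, (if a i = μ i then (0:ℝ) else 1)) ≤ d := by
    calc (∑ i, (if a i = μ i then (0:ℝ) else 1)) ≤ ∑ _i : Fin d, (1:ℝ) :=
          Finset.sum_le_sum fun i _ => by split <;> norm_num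
    _ = d := by simp
  have h3 := ip_eq Δ μ a
  constructor <;> unfold bp <;> rw [h3] <;>
    nlinarith [mul_nonneg hΔ h1, mul_le_mul_of_nonneg_left h2 hΔ]

lemma bp_flip_diff {d : ℕ} (Δ : ℝ) (hΔ : 0 ≤ Δ) (i : Fin d) (μ a : Act d) :
    |bp Δ μ a - bp Δ (flip i μ) a| ≤ 2 * Δ := by
  have hdiff : bp Δ μ a - bp Δ (flip i μ) a
      = (wvec Δ μ i - wvec Δ (flip i μ) i) * embed a i := by
    unfold bp ip
    rw [show (1/3 + ∑ j, wvec Δ μ j * embed a j)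
        - (1/3 + ∑ j, wvec Δ (flip i μ) j * embed a j)
        = ∑ j, (wvec Δ μ j * embed a j - wvec Δ (flip i μ) j * embed a j) by
      rw [Finset.sum_sub_distrib]; ring]
    rw [Finset.sum_eq_single_of_mem i (Finset.mem_univ i)]
    · ring
    · intro j _ hj
      have : wvec Δ μ j = wvec Δ (flip i μ) j := by
        simp [wvec, flip, Function.update_of_ne hj]
      rw [this]; ring
  rw [hdiff]
  have : (wvec Δ μ i - wvec Δ (flip i μ) i) * embed a i = 2*Δ ∨
      (wvec Δ μ i - wvec Δ (flip i μ) i) * embed a i = -(2*Δ) := by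
    cases hμ : μ i <;> cases ha : a i <;>
      simp [wvec, embed, flip, hμ, ha] <;> [left; right; right; left] <;> ring
  rcases this with h | h <;> rw [h]
  · rw [abs_of_nonneg (by linarith)]
  · rw [abs_neg, abs_of_nonneg (by linarith)]


/-- there is a universal constant `c > 0` such that for every
`d ≥ 2`, every `K ≥ 1.5·d²` with `dK ≥ 3`, every `σ ∈ (0,1]` and every
deterministic algorithm `π` for the `K`-round hypercube instance, the
probability (over `μ` uniform on `{−Δ,Δ}^d`, `Δ = 1/√(96K)`, and the rewards)
that `Regret(K) ≥ d·√(K·σ²)/(16·√6)` is at least `c / log(dK)`. -/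
theorem constant_probability_regret_lower_bound :
    ∃ c : ℝ, 0 < c ∧
      ∀ (d K : ℕ) (σ : ℝ) (π : Alg d),
        2 ≤ d → (3 : ℝ) / 2 * (d : ℝ) ^ 2 ≤ (K : ℝ) → 3 ≤ d * K →
        0 < σ → σ ≤ 1 →
        c / Real.log ((d : ℝ) * (K : ℝ)) ≤
          probRegretGe d K σ
            ((d : ℝ) * Real.sqrt ((K : ℝ) * σ ^ 2) / (16 * Real.sqrt 6)) π := by
  classical
  refine ⟨1/10, by norm_num, ?_⟩
  intro d K σ π hd2 hKd hdK hσ0 hσ1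
  -- numeric setup
  have hd2' : (2:ℝ) ≤ (d:ℝ) := by exact_mod_cast hd2
  have hd0 : (0:ℝ) < (d:ℝ) := by linarith
  have hK6 : (6:ℝ) ≤ (K:ℝ) := by nlinarith
  have hK0 : (0:ℝ) < (K:ℝ) := by linarith
  have h96K : (0:ℝ) < 96 * (K:ℝ) := by linarith
  set Δ : ℝ := 1 / Real.sqrt (96 * (K:ℝ)) with hΔdef
  have hs : 0 < Real.sqrt (96*(K:ℝ)) := Real.sqrt_pos.2 h96K
  have hΔ0 : 0 < Δ := by rw [hΔdef]; positivity
  have hΔsq : Δ^2 = 1/(96*(K:ℝ)) := by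
    rw [hΔdef, div_pow, one_pow, Real.sq_sqrt h96K.le]
  have hΔd : (d:ℝ)*Δ ≤ 1/12 := by
    have h12 : 12*(d:ℝ) ≤ Real.sqrt (96*(K:ℝ)) := by
      have h144 : (12*(d:ℝ))^2 ≤ 96*(K:ℝ) := by nlinarith
      calc 12*(d:ℝ) = Real.sqrt ((12*(d:ℝ))^2) := (Real.sqrt_sq (by positivity)).symm
      _ ≤ _ := Real.sqrt_le_sqrt h144
    rw [hΔdef, mul_one_div, div_le_div_iff₀ hs (by norm_num : (0:ℝ) < 12)]
    linarith
  have hbp : ∀ (μ a : Act d), 1/4 ≤ bp Δ μ a ∧ bp Δ μ a ≤ 5/12 :=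
    bp_bounds Δ hΔ0.le hΔd
  -- the per-round probability kernels
  set f : Act d → ℕ → (ℕ → Bool) → ℝ := fun μ k ω =>
    if ω k then bp Δ μ (act π σ ω k) else 1 - bp Δ μ (act π σ ω k) with hfdef
  have hfnn : ∀ μ k ω, 0 ≤ f μ k ω := by
    intro μ k ω
    rw [hfdef]
    dsimp only
    split <;> linarith [(hbp μ (act π σ ω k)).1, (hbp μ (act π σ ω k)).2]
  have hfdep : ∀ μ k (ω ω' : ℕ → Bool), (∀ j, j ≤ k → ω j = ω' j) → f μ k ω = f μ k ω' := by
    intro μ k ω ω' h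
    have h1 : act π σ ω k = act π σ ω' k := act_congr π σ k ω ω' (fun j hj => h j hj.le)
    rw [hfdef]
    dsimp only
    rw [h1, h k le_rfl]
  have hfstep : ∀ μ k (ω : ℕ → Bool),
      f μ k (Function.update ω k true) + f μ k (Function.update ω k false) = 1 := by
    intro μ k ω
    have h1 : act π σ (Function.update ω k true) k = act π σ (Function.update ω k false) k :=
      act_congr π σ k _ _ (fun j hj => by
        rw [Function.update_of_ne (by omega), Function.update_of_ne (by omega)])
    rw [hfdef]
    dsimp only
    rw [Function.update_self, Function.update_self, if_pos rfl, if_neg (by simp), h1]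
    ring
  -- trajP as a product of kernels
  have htraj : ∀ μ (ω : Fin K → Bool),
      trajP d K Δ σ π μ ω = ∏ k : Fin K, f μ (k : ℕ) (ext ω) := by
    intro μ ω
    unfold trajP
    apply Finset.prod_congr rfl
    intro k _
    have hx : ext ω (k : ℕ) = ω k := by simp [ext, k.isLt]
    rw [hfdef]
    dsimp only
    rw [hx]
  have hP1 : ∀ μ, ∑ ω : Fin K → Bool, trajP d K Δ σ π μ ω = 1 := by
    intro μ
    rw [Finset.sum_congr rfl (fun ω _ => htraj μ ω)]
    exact sum_prod_eq (f μ) (hfdep μ) (hfstep μ) K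
  have hPnn : ∀ μ (ω : Fin K → Bool), 0 ≤ trajP d K Δ σ π μ ω := by
    intro μ ω
    rw [htraj]
    exact Finset.prod_nonneg fun k _ => hfnn _ _ _
  -- Bhattacharyya lower bound
  have hKΔ : (K:ℝ)*Δ^2 = 1/96 := by rw [hΔsq]; field_simp
  have hBC : ∀ (μ : Act d) (i : Fin d), 31/32 ≤
      ∑ ω : Fin K → Bool, Real.sqrt (trajP d K Δ σ π μ ω * trajP d K Δ σ π (flip i μ) ω) := by
    intro μ i
    set g : ℕ → (ℕ → Bool) → ℝ := fun k ω => Real.sqrt (f μ k ω * f (flip i μ) k ω) with hgdef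
    have hgnn : ∀ k ω, 0 ≤ g k ω := fun k ω => Real.sqrt_nonneg _
    have hgdep : ∀ k (ω ω' : ℕ → Bool), (∀ j, j ≤ k → ω j = ω' j) → g k ω = g k ω' := by
      intro k ω ω' h
      rw [hgdef]
      dsimp only
      rw [hfdep μ k ω ω' h, hfdep (flip i μ) k ω ω' h]
    have hgstep : ∀ k (ω : ℕ → Bool),
        1 - 3*Δ^2 ≤ g k (Function.update ω k true) + g k (Function.update ω k false) := by
      intro k ω
      have h1 : act π σ (Function.update ω k true) k = act π σ (Function.update ω k false) k :=
        act_congr π σ k _ _ (fun j hj => by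
          rw [Function.update_of_ne (by omega), Function.update_of_ne (by omega)])
      set a := act π σ (Function.update ω k true) k with ha
      have e1 : g k (Function.update ω k true) = Real.sqrt (bp Δ μ a * bp Δ (flip i μ) a) := by
        simp only [hgdef, hfdef, Function.update_self, if_true]; rfl
      have e2 : g k (Function.update ω k false)
          = Real.sqrt ((1 - bp Δ μ a) * (1 - bp Δ (flip i μ) a)) := by
        simp only [hgdef, hfdef, Function.update_self, Bool.false_eq_true, if_false]
        rw [← h1]
      rw [e1, e2]
      exact bc_step Δ _ _ hΔ0.le (hbp μ a).1 (hbp μ a).2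
        (hbp (flip i μ) a).1 (hbp (flip i μ) a).2 (bp_flip_diff Δ hΔ0.le i μ a)
    have hsb : ∀ ω : Fin K → Bool,
        Real.sqrt (trajP d K Δ σ π μ ω * trajP d K Δ σ π (flip i μ) ω)
          = ∏ k : Fin K, g (k : ℕ) (ext ω) := by
      intro ω
      rw [htraj, htraj, ← Finset.prod_mul_distrib]
      exact sqrt_prod' _ _ (fun k _ => mul_nonneg (hfnn _ _ _) (hfnn _ _ _))
    rw [Finset.sum_congr rfl (fun ω _ => hsb ω)]
    have hΔsmall : 3*Δ^2 ≤ 1/2 := by nlinarith [hΔsq]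
    calc (31:ℝ)/32 = 1 + (K:ℝ)*(-(3*Δ^2)) := by linear_combination 3*hKΔ
    _ ≤ (1 + -(3*Δ^2))^K := one_add_mul_le_pow (by linarith) K
    _ = (1 - 3*Δ^2)^K := by ring_nf
    _ ≤ _ := sum_prod_ge (1 - 3*Δ^2) (by linarith) g hgnn hgdep hgstep K
  -- minimum mass lower bound
  have hminsum : ∀ (μ : Act d) (i : Fin d), (961:ℝ)/2048 ≤
      ∑ ω : Fin K → Bool, min (trajP d K Δ σ π μ ω) (trajP d K Δ σ π (flip i μ) ω) := by
    intro μ i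
    have h1 := min_sum_ge (fun ω : Fin K → Bool => trajP d K Δ σ π μ ω)
      (fun ω => trajP d K Δ σ π (flip i μ) ω) (hPnn μ) (hPnn (flip i μ))
      (hP1 μ) (hP1 (flip i μ))
    have h2 := hBC μ i
    nlinarith
  -- mismatch counts
  set mI : Fin d → Act d → (Fin K → Bool) → ℝ := fun i μ ω =>
    ∑ k : Fin K, (if act π σ (ext ω) (k : ℕ) i = μ i then (0:ℝ) else 1) with hmIdef
  set m : Act d → (Fin K → Bool) → ℝ := fun μ ω =>
    ∑ k : Fin K, ∑ i, (if act π σ (ext ω) (k : ℕ) i = μ i then (0:ℝ) else 1) with hmdef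
  have hm_eq : ∀ μ ω, m μ ω = ∑ i, mI i μ ω := by
    intro μ ω
    rw [hmdef, hmIdef]
    exact Finset.sum_comm
  have hmInn : ∀ i μ ω, 0 ≤ mI i μ ω := by
    intro i μ ω
    exact Finset.sum_nonneg fun k _ => by positivity
  have hmnn : ∀ μ ω, 0 ≤ m μ ω := by
    intro μ ω
    rw [hm_eq]
    exact Finset.sum_nonneg fun i _ => hmInn i μ ω
  have hmub : ∀ μ ω, m μ ω ≤ (d:ℝ)*K := by
    intro μ ω
    rw [hmdef]
    calc (∑ k : Fin K, ∑ i, (if act π σ (ext ω) (k : ℕ) i = μ i then (0:ℝ) else 1))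
        ≤ ∑ _k : Fin K, ∑ _i : Fin d, (1:ℝ) := by
          apply Finset.sum_le_sum
          intro k _
          apply Finset.sum_le_sum
          intro i _
          split <;> norm_num
    _ = (d:ℝ)*K := by simp [mul_comm]
  have hmIK : ∀ (i : Fin d) μ ω, mI i μ ω + mI i (flip i μ) ω = K := by
    intro i μ ω
    rw [hmIdef]
    dsimp only
    rw [← Finset.sum_add_distrib]
    have : ∀ k : Fin K, ((if act π σ (ext ω) (k : ℕ) i = μ i then (0:ℝ) else 1)
        + (if act π σ (ext ω) (k : ℕ) i = flip i μ i then (0:ℝ) else 1)) = 1 := by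
      intro k
      have hfl : flip i μ i = !μ i := by simp [flip]
      rw [hfl]
      cases hμ : μ i <;> cases ha : act π σ (ext ω) (k : ℕ) i <;> simp [hμ, ha]
    rw [Finset.sum_congr rfl (fun k _ => this k)]
    simp
  -- regret identity
  have hreg : ∀ μ ω, regret d K Δ σ π μ ω = σ * (2*Δ) * m μ ω := by
    intro μ ω
    unfold regret
    rw [hmdef]
    dsimp only
    rw [Finset.mul_sum]
    apply Finset.sum_congr rfl
    intro k _
    rw [maxRew_eq Δ hΔ0.le, ip_eq, Finset.mul_sum, Finset.mul_sum]
    rw [← Finset.mul_sum, ← Finset.mul_sum]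
    ring
  -- threshold identity
  have h96eq : Real.sqrt (96*(K:ℝ)) = 4*Real.sqrt 6*Real.sqrt (K:ℝ) := by
    rw [show (96:ℝ)*(K:ℝ) = (4:ℝ)^2*(6*(K:ℝ)) by ring,
      Real.sqrt_mul (by positivity) (6*(K:ℝ)), Real.sqrt_sq (by norm_num),
      Real.sqrt_mul (by norm_num : (0:ℝ) ≤ 6) (K:ℝ)]
    ring
  have hs6 : (0:ℝ) < Real.sqrt 6 := Real.sqrt_pos.2 (by norm_num)
  have hsK : (0:ℝ) < Real.sqrt (K:ℝ) := Real.sqrt_pos.2 hK0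
  have ht_eq : (d:ℝ) * Real.sqrt ((K:ℝ) * σ^2) / (16 * Real.sqrt 6)
      = σ * (2*Δ) * ((d:ℝ)*(K:ℝ)/8) := by
    have h1 : Real.sqrt ((K:ℝ)*σ^2) = Real.sqrt (K:ℝ) * σ := by
      rw [Real.sqrt_mul hK0.le, Real.sqrt_sq hσ0.le]
    have h2 : Δ = 1/(4*Real.sqrt 6*Real.sqrt (K:ℝ)) := by rw [hΔdef, h96eq]
    rw [h1, h2]
    field_simp
    linear_combination 32 * Real.sq_sqrt hK0.le
  -- event equivalence
  have hev : ∀ μ ω, ((d:ℝ) * Real.sqrt ((K:ℝ) * σ^2) / (16 * Real.sqrt 6)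
      ≤ regret d K Δ σ π μ ω) ↔ ((d:ℝ)*(K:ℝ)/8 ≤ m μ ω) := by
    intro μ ω
    rw [hreg, ht_eq]
    exact mul_le_mul_iff_right₀ (by positivity)
  -- per-coordinate expectation bound
  have hcoord : ∀ i : Fin d, (961:ℝ)/2048 * K * 2^d ≤
      2 * ∑ μ : Act d, ∑ ω : Fin K → Bool, trajP d K Δ σ π μ ω * mI i μ ω := by
    intro i
    have hpair : ∀ μ, (961:ℝ)/2048 * K ≤
        ∑ ω : Fin K → Bool, (trajP d K Δ σ π μ ω * mI i μ ω
          + trajP d K Δ σ π (flip i μ) ω * mI i (flip i μ) ω) := by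
      intro μ
      have hpt : ∀ ω : Fin K → Bool,
          min (trajP d K Δ σ π μ ω) (trajP d K Δ σ π (flip i μ) ω) * K
            ≤ trajP d K Δ σ π μ ω * mI i μ ω
              + trajP d K Δ σ π (flip i μ) ω * mI i (flip i μ) ω := by
        intro ω
        have h1 := hmIK i μ ω
        have h2 : min (trajP d K Δ σ π μ ω) (trajP d K Δ σ π (flip i μ) ω)
            ≤ trajP d K Δ σ π μ ω := min_le_left _ _
        have h3 : min (trajP d K Δ σ π μ ω) (trajP d K Δ σ π (flip i μ) ω)
            ≤ trajP d K Δ σ π (flip i μ) ω := min_le_right _ _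
        calc min (trajP d K Δ σ π μ ω) (trajP d K Δ σ π (flip i μ) ω) * K
            = min (trajP d K Δ σ π μ ω) (trajP d K Δ σ π (flip i μ) ω) * mI i μ ω
              + min (trajP d K Δ σ π μ ω) (trajP d K Δ σ π (flip i μ) ω) * mI i (flip i μ) ω := by
              rw [← mul_add, h1]
        _ ≤ _ := add_le_add (mul_le_mul_of_nonneg_right h2 (hmInn i μ ω))
              (mul_le_mul_of_nonneg_right h3 (hmInn i (flip i μ) ω))
      calc (961:ℝ)/2048 * K
          ≤ (∑ ω : Fin K → Bool, min (trajP d K Δ σ π μ ω) (trajP d K Δ σ π (flip i μ) ω)) * K :=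
            mul_le_mul_of_nonneg_right (hminsum μ i) hK0.le
      _ = ∑ ω : Fin K → Bool,
            min (trajP d K Δ σ π μ ω) (trajP d K Δ σ π (flip i μ) ω) * K := Finset.sum_mul _ _ _
      _ ≤ _ := Finset.sum_le_sum fun ω _ => hpt ω
    have hswap : ∑ μ : Act d, ∑ ω : Fin K → Bool, trajP d K Δ σ π (flip i μ) ω * mI i (flip i μ) ω
        = ∑ μ : Act d, ∑ ω : Fin K → Bool, trajP d K Δ σ π μ ω * mI i μ ω :=
      Fintype.sum_equiv (flipEquiv i)
        (fun μ => ∑ ω : Fin K → Bool, trajP d K Δ σ π (flip i μ) ω * mI i (flip i μ) ω)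
        (fun μ => ∑ ω : Fin K → Bool, trajP d K Δ σ π μ ω * mI i μ ω) (fun μ => rfl)
    have hcard : (Finset.univ : Finset (Act d)).card = 2^d := by
      rw [Finset.card_univ]
      simp [Fintype.card_fun]
    calc (961:ℝ)/2048 * K * 2^d
        = ∑ _μ : Act d, (961:ℝ)/2048 * K := by
          rw [Finset.sum_const, hcard, nsmul_eq_mul]
          push_cast
          ring
    _ ≤ ∑ μ : Act d, ∑ ω : Fin K → Bool, (trajP d K Δ σ π μ ω * mI i μ ω
          + trajP d K Δ σ π (flip i μ) ω * mI i (flip i μ) ω) :=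
          Finset.sum_le_sum fun μ _ => hpair μ
    _ = ∑ μ : Act d, (∑ ω : Fin K → Bool, trajP d K Δ σ π μ ω * mI i μ ω)
          + ∑ μ : Act d, (∑ ω : Fin K → Bool, trajP d K Δ σ π (flip i μ) ω * mI i (flip i μ) ω) := by
          rw [← Finset.sum_add_distrib]
          apply Finset.sum_congr rfl
          intro μ _
          rw [← Finset.sum_add_distrib]
    _ = 2 * ∑ μ : Act d, ∑ ω : Fin K → Bool, trajP d K Δ σ π μ ω * mI i μ ω := by
          rw [hswap]; ring
  -- total expectation lower bound
  have hE : (961:ℝ)/4096 * d * K * 2^d ≤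
      ∑ μ : Act d, ∑ ω : Fin K → Bool, trajP d K Δ σ π μ ω * m μ ω := by
    have e1 : ∀ μ, ∑ ω : Fin K → Bool, trajP d K Δ σ π μ ω * m μ ω
        = ∑ i : Fin d, ∑ ω : Fin K → Bool, trajP d K Δ σ π μ ω * mI i μ ω := by
      intro μ
      calc ∑ ω : Fin K → Bool, trajP d K Δ σ π μ ω * m μ ω
          = ∑ ω : Fin K → Bool, ∑ i : Fin d, trajP d K Δ σ π μ ω * mI i μ ω := by
            apply Finset.sum_congr rfl
            intro ω _
            rw [hm_eq, Finset.mul_sum]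
      _ = ∑ i : Fin d, ∑ ω : Fin K → Bool, trajP d K Δ σ π μ ω * mI i μ ω := Finset.sum_comm
    have h1 : ∑ μ : Act d, ∑ ω : Fin K → Bool, trajP d K Δ σ π μ ω * m μ ω
        = ∑ i : Fin d, ∑ μ : Act d, ∑ ω : Fin K → Bool, trajP d K Δ σ π μ ω * mI i μ ω := by
      rw [Finset.sum_congr rfl (fun μ _ => e1 μ)]
      exact Finset.sum_comm
    rw [h1]
    have h2 : ∀ i : Fin d, (961:ℝ)/4096 * K * 2^d ≤
        ∑ μ : Act d, ∑ ω : Fin K → Bool, trajP d K Δ σ π μ ω * mI i μ ω := by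
      intro i
      linarith [hcoord i]
    calc (961:ℝ)/4096 * d * K * 2^d = ∑ _i : Fin d, (961:ℝ)/4096 * K * 2^d := by
          rw [Finset.sum_const, Finset.card_univ, Fintype.card_fin, nsmul_eq_mul]
          ring
    _ ≤ _ := Finset.sum_le_sum fun i _ => h2 i
  -- upper bound via the tail event
  set t : ℝ := (d:ℝ) * Real.sqrt ((K:ℝ) * σ^2) / (16 * Real.sqrt 6) with htdef
  set S : ℝ := ∑ μ : Act d, ∑ ω : Fin K → Bool,
    (if t ≤ regret d K Δ σ π μ ω then trajP d K Δ σ π μ ω else 0) with hSdef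
  have hup : ∑ μ : Act d, ∑ ω : Fin K → Bool, trajP d K Δ σ π μ ω * m μ ω
      ≤ (d:ℝ)*K * S + ((d:ℝ)*K/8) * 2^d := by
    have hpt : ∀ μ (ω : Fin K → Bool), trajP d K Δ σ π μ ω * m μ ω
        ≤ (d:ℝ)*K * (if t ≤ regret d K Δ σ π μ ω then trajP d K Δ σ π μ ω else 0)
          + ((d:ℝ)*K/8) * trajP d K Δ σ π μ ω := by
      intro μ ω
      by_cases h : t ≤ regret d K Δ σ π μ ω
      · rw [if_pos h]
        have := hmub μ ω
        have := hPnn μ ω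
        nlinarith [mul_nonneg (hPnn μ ω) (hmnn μ ω)]
      · rw [if_neg h]
        have hlt : m μ ω ≤ (d:ℝ)*K/8 := by
          by_contra hc
          exact h ((hev μ ω).2 (by linarith))
        nlinarith [hPnn μ ω]
    calc ∑ μ : Act d, ∑ ω : Fin K → Bool, trajP d K Δ σ π μ ω * m μ ω
        ≤ ∑ μ : Act d, ∑ ω : Fin K → Bool,
            ((d:ℝ)*K * (if t ≤ regret d K Δ σ π μ ω then trajP d K Δ σ π μ ω else 0)
              + ((d:ℝ)*K/8) * trajP d K Δ σ π μ ω) :=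
          Finset.sum_le_sum fun μ _ => Finset.sum_le_sum fun ω _ => hpt μ ω
    _ = (d:ℝ)*K * S + ((d:ℝ)*K/8) * ∑ μ : Act d, ∑ ω : Fin K → Bool, trajP d K Δ σ π μ ω := by
          rw [hSdef, Finset.mul_sum, Finset.mul_sum, ← Finset.sum_add_distrib]
          apply Finset.sum_congr rfl
          intro μ _
          rw [Finset.mul_sum, Finset.mul_sum, ← Finset.sum_add_distrib]
    _ = (d:ℝ)*K * S + ((d:ℝ)*K/8) * 2^d := by
          rw [Finset.sum_congr rfl (fun μ _ => hP1 μ), Finset.sum_const, Finset.card_univ,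
            nsmul_eq_mul]
          simp [Fintype.card_fun]
  -- conclude the probability bound
  have hdK0 : (0:ℝ) < (d:ℝ)*K := by positivity
  have hSge : (449:ℝ)/4096 * 2^d ≤ S := by
    have h1 : (961:ℝ)/4096 * d * K * 2^d ≤ (d:ℝ)*K * S + ((d:ℝ)*K/8) * 2^d :=
      le_trans hE hup
    have h2 : (449:ℝ)/4096 * ((d:ℝ)*K) * 2^d ≤ (d:ℝ)*K * S := by nlinarith
    have h3 : (0:ℝ) < (2:ℝ)^d := by positivity
    nlinarith
  have hprob : (1:ℝ)/10 ≤ probRegretGe d K σ t π := by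
    unfold probRegretGe
    have hΔmatch : (1 : ℝ) / Real.sqrt (96 * (K:ℕ)) = Δ := by rw [hΔdef]
    rw [hΔmatch]
    rw [← hSdef]
    have h2 : (0:ℝ) < (2:ℝ)^d := by positivity
    rw [div_mul_eq_mul_div, one_mul, le_div_iff₀ h2]
    calc (1:ℝ)/10 * 2^d ≤ (449:ℝ)/4096 * 2^d := by nlinarith
    _ ≤ S := hSge
  -- final: c / log(dK) ≤ 1/10 ≤ prob
  have hdK3 : (3:ℝ) ≤ (d:ℝ)*(K:ℝ) := by
    have : ((3:ℕ):ℝ) ≤ ((d*K:ℕ):ℝ) := Nat.cast_le.2 hdK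
    push_cast at this
    linarith
  have hlog1 : 1 ≤ Real.log ((d:ℝ)*(K:ℝ)) := by
    rw [Real.le_log_iff_exp_le (by linarith)]
    have h1 := Real.exp_one_lt_d9
    linarith
  calc (1:ℝ)/10 / Real.log ((d:ℝ)*(K:ℝ)) ≤ (1:ℝ)/10 := by
        rw [div_le_iff₀ (by linarith)]
        nlinarith
  _ ≤ probRegretGe d K σ t π := hprob

end HypercubeBandit2
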